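/- Let u_1,…,u_n, v_1,…,v_n ∈ ℤ^n with ⟨u_i, v_j⟩ = δ_{ij}, let p_1,…,p_k, q_{k+1},…,q_n ∈ ℤ^n with ⟨p_l, q_i⟩ = 0 for all l, i, and let a ∈ ℝ^n. Define f_i : ℂ^n → ℂ by f_i(z) = ∏_{j∈I⁺_i} z_j^{⟨u_j,q_i⟩} − e^{⟨a,q_i⟩} ∏_{j∈I⁻_i} z_j^{−⟨u_j,q_i⟩}, where I⁺_i = {j : ⟨u_j,q_i⟩ ≥ 0}, I⁻_i = {j : ⟨u_j,q_i⟩ ≤ 0}, and let Df(z) = (∂f_i/∂z_j(z)) be the (n−k)×n complex Jacobian matrix. Let C_λ(V) ⊂ ℂ^n be the image of w ↦ (exp(⟨a,v_i⟩ + ∑_l ⟨p_l,v_i⟩ w_l))_{i=1}^n, w ∈ ℂ^k. Then for every z in the topological closure of C_λ(V) in ℂ^n, the rank of Df(z) equals the rank of Df(|z|), where |z| = (|z_1|,…,|z_n|). -/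

import Mathlib

open Finset Matrix

lemma key_fderiv {n : ℕ} (g : (Fin n → ℂ) → ℂ) (hg : Differentiable ℂ g)
    (t : Fin n → ℂ) (τ : ℂ) (hgt : ∀ w, g (t * w) = τ * g w) (r : Fin n → ℂ) (j : Fin n) :
    fderiv ℂ g (t * r) (Pi.single j 1) * t j = τ * fderiv ℂ g r (Pi.single j 1) := by
  set L : (Fin n → ℂ) →L[ℂ] (Fin n → ℂ) :=
    ContinuousLinearMap.pi (fun j' => t j' • ContinuousLinearMap.proj j') with hLdef
  have hL : ∀ w, L w = t * w := by
    intro w; funext j'; simp [hLdef, mul_comm]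
  have h1 : fderiv ℂ (g ∘ L) r = (fderiv ℂ g (t * r)).comp L := by
    rw [fderiv_comp r (hg _) L.differentiableAt, L.fderiv, hL]
  have h2 : (g ∘ L) = fun w => τ * g w := by
    funext w; simp [Function.comp, hL, hgt]
  have h3 : fderiv ℂ (fun w => τ * g w) r = τ • fderiv ℂ g r :=
    fderiv_const_mul (hg r) τ
  have h4 := congrFun (congrArg DFunLike.coe (h1.symm.trans (h2 ▸ h3))) (Pi.single j 1)
  simp only [ContinuousLinearMap.comp_apply, ContinuousLinearMap.smul_apply,
    smul_eq_mul] at h4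
  have h5 : L (Pi.single j 1) = Pi.single j (t j) := by
    funext j'; by_cases h : j' = j <;> simp [hLdef, h, Pi.single_apply]
  rw [h5] at h4
  have h6 : (Pi.single j (t j) : Fin n → ℂ) = t j • (Pi.single j 1 : Fin n → ℂ) := by
    funext j'; by_cases h : j' = j <;> simp [h, Pi.single_apply]
  rw [h6, (fderiv ℂ g (t * r)).map_smul, smul_eq_mul] at h4
  rw [mul_comm]; exact h4

lemma dual_comm {n : ℕ} (u v : Fin n → Fin n → ℤ)
    (hδ : ∀ i j, ∑ m, u i m * v j m = if i = j then (1 : ℤ) else 0) :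
    ∀ m m', ∑ j, v j m * u j m' = if m = m' then (1 : ℤ) else 0 := by
  intro m m'
  let U : Matrix (Fin n) (Fin n) ℤ := Matrix.of u
  let W : Matrix (Fin n) (Fin n) ℤ := Matrix.of v
  have h1 : U * Wᵀ = 1 := by
    ext i j
    simp [U, W, Matrix.mul_apply, Matrix.transpose_apply, Matrix.one_apply, hδ]
  have h2 : Wᵀ * U = 1 := mul_eq_one_comm.mp h1
  have h3 := congrFun (congrFun h2 m) m'
  simpa [U, W, Matrix.mul_apply, Matrix.transpose_apply, Matrix.one_apply] using h3

lemma dual_orth {n k : ℕ} (u v : Fin n → Fin n → ℤ)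
    (hδ : ∀ i j, ∑ m, u i m * v j m = if i = j then (1 : ℤ) else 0)
    (p : Fin k → Fin n → ℤ) (q : Fin (n - k) → Fin n → ℤ)
    (hpq : ∀ (l : Fin k) (i : Fin (n - k)), ∑ m, p l m * q i m = 0)
    (l : Fin k) (i : Fin (n - k)) :
    ∑ j, (∑ m, u j m * q i m) * (∑ m, p l m * v j m) = 0 := by
  have hc := dual_comm u v hδ
  calc ∑ j, (∑ m, u j m * q i m) * (∑ m', p l m' * v j m')
      = ∑ j, ∑ m, ∑ m', (q i m * p l m') * (v j m' * u j m) := by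
        refine Finset.sum_congr rfl fun j _ => ?_
        rw [Finset.sum_mul_sum]
        refine Finset.sum_congr rfl fun m _ => Finset.sum_congr rfl fun m' _ => by ring
    _ = ∑ m, ∑ m', (q i m * p l m') * ∑ j, (v j m' * u j m) := by
        rw [Finset.sum_comm]
        refine Finset.sum_congr rfl fun m _ => ?_
        rw [Finset.sum_comm]
        refine Finset.sum_congr rfl fun m' _ => (Finset.mul_sum _ _ _).symm
    _ = ∑ m, q i m * p l m := by
        refine Finset.sum_congr rfl fun m _ => ?_
        rw [Finset.sum_eq_single m]
        · simp [hc]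
        · intro m' _ hm'; simp [hc, hm']
        · intro h; simp at h
    _ = 0 := by rw [← hpq l i]; exact Finset.sum_congr rfl fun m _ => mul_comm _ _

lemma sum_split {n : ℕ} (e : Fin n → ℤ) (θ : Fin n → ℝ)
    (h0 : ∑ j, (e j : ℝ) * θ j = 0) :
    ∑ j ∈ univ.filter (fun j => 0 ≤ e j), ((e j).toNat : ℝ) * θ j
      = ∑ j ∈ univ.filter (fun j => e j ≤ 0), (((-e j).toNat : ℝ)) * θ j := by
  have key : ∑ j, ((if 0 ≤ e j then ((e j).toNat : ℝ) * θ j else 0)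
      - (if e j ≤ 0 then (((-e j).toNat : ℝ)) * θ j else 0)) = ∑ j, (e j : ℝ) * θ j := by
    refine Finset.sum_congr rfl fun j _ => ?_
    rcases lt_trichotomy (e j) 0 with h | h | h
    · rw [if_neg (not_le.mpr h), if_pos h.le]
      have h2 : (((-e j).toNat : ℝ)) = -(e j : ℝ) := by
        rw [show (((-e j).toNat : ℕ) : ℝ) = (((-e j).toNat : ℤ) : ℝ) by exact_mod_cast rfl,
          Int.toNat_of_nonneg (by omega : (0:ℤ) ≤ -e j)]; push_cast; ring
      rw [h2]; ring
    · simp [h]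
    · rw [if_pos h.le, if_neg (not_le.mpr h)]
      have h2 : (((e j).toNat : ℝ)) = (e j : ℝ) := by
        rw [show (((e j).toNat : ℕ) : ℝ) = (((e j).toNat : ℤ) : ℝ) by exact_mod_cast rfl,
          Int.toNat_of_nonneg h.le]
      rw [h2]; ring
  rw [h0, Finset.sum_sub_distrib] at key
  rw [Finset.sum_filter, Finset.sum_filter]
  linarith

lemma prod_exp_pow {n : ℕ} (s : Finset (Fin n)) (α : Fin n → ℕ) (θ : Fin n → ℝ) :
    ∏ j ∈ s, Complex.exp ((θ j : ℂ) * Complex.I) ^ (α j)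
      = Complex.exp (((∑ j ∈ s, (α j : ℝ) * θ j : ℝ) : ℂ) * Complex.I) := by
  have h1 : ∀ j ∈ s, Complex.exp ((θ j : ℂ) * Complex.I) ^ (α j)
      = Complex.exp (((α j : ℝ) * θ j : ℝ) * Complex.I) := by
    intro j _
    rw [← Complex.exp_nat_mul]
    push_cast
    ring_nf
  rw [Finset.prod_congr rfl h1, ← Complex.exp_sum]
  congr 1
  push_cast
  rw [Finset.sum_mul]

lemma diff_prod_pow {n : ℕ} (s : Finset (Fin n)) (α : Fin n → ℕ) :
    Differentiable ℂ (fun z : Fin n → ℂ => ∏ j ∈ s, z j ^ α j) := by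
  classical
  induction s using Finset.induction with
  | empty => simpa using differentiable_const (1 : ℂ)
  | @insert j s hj ih =>
      simp only [Finset.prod_insert hj]
      exact ((differentiable_apply j : Differentiable ℂ fun z : Fin n → ℂ => z j).pow _).mul ih


/-- On the closure of the local model `C_λ(V)` of the complex subtorus, the
rank of the Jacobian matrix `Df` at `z` equals its rank at `|z| = (|z 1|, …, |z n|)`. -/
theorem stmt6 (n k : ℕ)
    (u v : Fin n → Fin n → ℤ)
    (hδ : ∀ i j, ∑ m, u i m * v j m = if i = j then (1 : ℤ) else 0)
    (p : Fin k → Fin n → ℤ) (q : Fin (n - k) → Fin n → ℤ)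
    (hpq : ∀ (l : Fin k) (i : Fin (n - k)), ∑ m, p l m * q i m = 0)
    (a : Fin n → ℝ)
    (f : Fin (n - k) → (Fin n → ℂ) → ℂ)
    (hf : ∀ i z, f i z =
      (∏ j ∈ univ.filter fun j => 0 ≤ ∑ m, u j m * q i m,
        z j ^ (∑ m, u j m * q i m).toNat)
      - (Real.exp (∑ m, a m * (q i m : ℝ)) : ℂ) *
        ∏ j ∈ univ.filter fun j => (∑ m, u j m * q i m) ≤ 0,
          z j ^ (-∑ m, u j m * q i m).toNat)
    (Df : (Fin n → ℂ) → Matrix (Fin (n - k)) (Fin n) ℂ)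
    (hDf : ∀ z, Df z = Matrix.of fun i j => fderiv ℂ (f i) z (Pi.single j 1))
    (F : (Fin k → ℂ) → (Fin n → ℂ))
    (hF : ∀ w i, F w i = Complex.exp
      (((∑ m, a m * (v i m : ℝ) : ℝ) : ℂ) + ∑ l, ((∑ m, p l m * v i m : ℤ) : ℂ) * w l)) :
    ∀ z ∈ closure (Set.range F),
      (Df z).rank = (Df fun i => ((‖z i‖ : ℝ) : ℂ)).rank := by
  intro z hz
  -- sequence in the range converging to z
  obtain ⟨x, hxmem, hxlim⟩ := mem_closure_iff_seq_limit.mp hz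
  choose w hw using hxmem
  -- phase functions
  set θ : ℕ → Fin n → ℝ :=
    fun m j => ∑ l, ((∑ m', p l m' * v j m' : ℤ) : ℝ) * (w m l).im with hθdef
  set ts : ℕ → Fin n → ℂ := fun m j => Complex.exp ((θ m j : ℂ) * Complex.I) with htsdef
  -- polar factorization at each stage
  have hpolar : ∀ m j, x m j = ts m j * ((‖x m j‖ : ℝ) : ℂ) := by
    intro m j
    rw [← hw m, hF]
    set ζ : ℂ := ((∑ m', a m' * (v j m' : ℝ) : ℝ) : ℂ)
      + ∑ l, ((∑ m', p l m' * v j m' : ℤ) : ℂ) * w m l with hζdef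
    have him : ζ.im = θ m j := by
      rw [hζdef]
      simp [Complex.add_im, Complex.im_sum, Complex.mul_im, hθdef]
    have hsplit : ζ = (ζ.re : ℂ) + (θ m j : ℂ) * Complex.I := by
      rw [← him]; exact (Complex.re_add_im ζ).symm
    rw [hsplit, Complex.exp_add]
    have habs : ‖Complex.exp (ζ.re : ℂ) * Complex.exp ((θ m j : ℂ) * Complex.I)‖
        = Real.exp ζ.re := by
      rw [norm_mul, Complex.norm_exp, Complex.norm_exp]; simp
    rw [habs]
    simp only [htsdef]
    rw [← Complex.ofReal_exp]
    ring
  -- the compact set of admissible phases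
  set K : Set (Fin n → ℂ) := {t | (∀ j, ‖t j‖ = 1) ∧ ∀ i,
    (∏ j ∈ univ.filter fun j => 0 ≤ ∑ m, u j m * q i m,
      t j ^ (∑ m, u j m * q i m).toNat)
    = ∏ j ∈ univ.filter fun j => (∑ m, u j m * q i m) ≤ 0,
        t j ^ (-∑ m, u j m * q i m).toNat} with hKdef
  have hKmem : ∀ m, ts m ∈ K := by
    intro m
    constructor
    · intro j; simp [htsdef, Complex.norm_exp]
    · intro i
      have h0 : ∑ j, ((∑ m', u j m' * q i m' : ℤ) : ℝ) * θ m j = 0 := by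
        have horth := fun l => dual_orth u v hδ p q hpq l i
        calc ∑ j, ((∑ m', u j m' * q i m' : ℤ) : ℝ) * θ m j
            = ∑ j, ∑ l, (((∑ m', u j m' * q i m' : ℤ) : ℝ)
                * ((∑ m', p l m' * v j m' : ℤ) : ℝ)) * (w m l).im := by
              refine Finset.sum_congr rfl fun j _ => ?_
              rw [hθdef, Finset.mul_sum]
              exact Finset.sum_congr rfl fun l _ => by ring
          _ = ∑ l, (∑ j, (((∑ m', u j m' * q i m' : ℤ)
                * (∑ m', p l m' * v j m' : ℤ) : ℤ) : ℝ)) * (w m l).im := by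
              rw [Finset.sum_comm]
              refine Finset.sum_congr rfl fun l _ => ?_
              rw [Finset.sum_mul]
              refine Finset.sum_congr rfl fun j _ => by push_cast; ring
          _ = 0 := by
              refine Finset.sum_eq_zero fun l _ => ?_
              rw [show (∑ j, (((∑ m', u j m' * q i m' : ℤ)
                * (∑ m', p l m' * v j m' : ℤ) : ℤ) : ℝ)) = ((0:ℤ):ℝ) by
                  rw [← horth l]; push_cast; ring_nf]
              simp
      have hs := sum_split (fun j => ∑ m', u j m' * q i m') (θ m) h0
      rw [htsdef]
      rw [prod_exp_pow, prod_exp_pow]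
      congr 2
      exact congrArg Complex.ofReal hs
  have hKcompact : IsCompact K := by
    have hsub : K ⊆ Set.univ.pi (fun _ : Fin n => Metric.sphere (0:ℂ) 1) := by
      intro t ht j _
      simpa using ht.1 j
    have hclosed : IsClosed K := by
      have h1 : IsClosed {t : Fin n → ℂ | ∀ j, ‖t j‖ = 1} := by
        rw [Set.setOf_forall]
        exact isClosed_iInter fun j =>
          isClosed_eq (continuous_norm.comp (continuous_apply j)) continuous_const
      have h2 : IsClosed {t : Fin n → ℂ | ∀ i,
          (∏ j ∈ univ.filter fun j => 0 ≤ ∑ m, u j m * q i m,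
            t j ^ (∑ m, u j m * q i m).toNat)
          = ∏ j ∈ univ.filter fun j => (∑ m, u j m * q i m) ≤ 0,
              t j ^ (-∑ m, u j m * q i m).toNat} := by
        rw [Set.setOf_forall]
        exact isClosed_iInter fun i =>
          isClosed_eq
            (continuous_finset_prod _ fun j _ => (continuous_apply j).pow _)
            (continuous_finset_prod _ fun j _ => (continuous_apply j).pow _)
      exact h1.inter h2
    exact (isCompact_univ_pi fun _ => isCompact_sphere 0 1).of_isClosed_subset hclosed hsub
  obtain ⟨t, htK, φ, hφ, hφlim⟩ := hKcompact.tendsto_subseq hKmem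
  -- pass to the limit in the polar factorization
  have hzt : ∀ j, z j = t j * ((‖z j‖ : ℝ) : ℂ) := by
    intro j
    have h1 : Filter.Tendsto (fun m => x (φ m) j) Filter.atTop (nhds (z j)) :=
      (tendsto_pi_nhds.mp (hxlim.comp hφ.tendsto_atTop)) j
    have h2 : Filter.Tendsto (fun m => ts (φ m) j) Filter.atTop (nhds (t j)) :=
      (tendsto_pi_nhds.mp hφlim) j
    have h3 : Filter.Tendsto (fun m => ((‖x (φ m) j‖ : ℝ) : ℂ))
        Filter.atTop (nhds ((‖z j‖ : ℝ) : ℂ)) :=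
      (Complex.continuous_ofReal.tendsto _).comp ((continuous_norm.tendsto _).comp h1)
    have h4 := h2.mul h3
    have h5 : (fun m => ts (φ m) j * ((‖x (φ m) j‖ : ℝ) : ℂ))
        = fun m => x (φ m) j := funext fun m => (hpolar (φ m) j).symm
    rw [h5] at h4
    exact tendsto_nhds_unique h1 h4
  -- set up scaling data
  set r : Fin n → ℂ := fun j => ((‖z j‖ : ℝ) : ℂ) with hrdef
  have hzr : z = t * r := funext fun j => by rw [Pi.mul_apply, ← hzt j]
  have htne : ∀ j, t j ≠ 0 := fun j => by
    intro h; have := htK.1 j; rw [h] at this; simp at this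
  set τ : Fin (n - k) → ℂ :=
    fun i => ∏ j ∈ univ.filter fun j => 0 ≤ ∑ m, u j m * q i m,
      t j ^ (∑ m, u j m * q i m).toNat with hτdef
  have hτne : ∀ i, τ i ≠ 0 := fun i =>
    Finset.prod_ne_zero_iff.mpr fun j _ => pow_ne_zero _ (htne j)
  -- differentiability
  have hdiff : ∀ i, Differentiable ℂ (f i) := by
    intro i
    have hfi : f i = fun z => (∏ j ∈ univ.filter fun j => 0 ≤ ∑ m, u j m * q i m,
        z j ^ (∑ m, u j m * q i m).toNat)
      - (Real.exp (∑ m, a m * (q i m : ℝ)) : ℂ) *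
        ∏ j ∈ univ.filter fun j => (∑ m, u j m * q i m) ≤ 0,
          z j ^ (-∑ m, u j m * q i m).toNat := funext fun z => hf i z
    rw [hfi]
    exact (diff_prod_pow _ _).sub ((diff_prod_pow _ _).const_mul _)
  -- the scaling identity
  have hscale : ∀ i w', f i (t * w') = τ i * f i w' := by
    intro i w'
    rw [hf, hf]
    have hP : (∏ j ∈ univ.filter fun j => 0 ≤ ∑ m, u j m * q i m,
        (t * w') j ^ (∑ m, u j m * q i m).toNat)
        = τ i * ∏ j ∈ univ.filter fun j => 0 ≤ ∑ m, u j m * q i m,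
            w' j ^ (∑ m, u j m * q i m).toNat := by
      simp only [hτdef]
      rw [← Finset.prod_mul_distrib]
      exact Finset.prod_congr rfl fun j _ => by rw [Pi.mul_apply, mul_pow]
    have hN : (∏ j ∈ univ.filter fun j => (∑ m, u j m * q i m) ≤ 0,
        (t * w') j ^ (-∑ m, u j m * q i m).toNat)
        = τ i * ∏ j ∈ univ.filter fun j => (∑ m, u j m * q i m) ≤ 0,
            w' j ^ (-∑ m, u j m * q i m).toNat := by
      simp only [hτdef]
      rw [htK.2 i, ← Finset.prod_mul_distrib]
      exact Finset.prod_congr rfl fun j _ => by rw [Pi.mul_apply, mul_pow]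
    rw [hP, hN]
    ring
  -- the derivative comparison
  have hkey : ∀ i j, fderiv ℂ (f i) z (Pi.single j 1) * t j
      = τ i * fderiv ℂ (f i) r (Pi.single j 1) := by
    intro i j
    rw [hzr]
    exact key_fderiv (f i) (hdiff i) t (τ i) (hscale i) r j
  -- matrix identity
  have hM : Df z * Matrix.diagonal t = Matrix.diagonal τ * Df r := by
    rw [hDf, hDf]
    ext i j
    rw [Matrix.mul_diagonal, Matrix.diagonal_mul]
    simpa using hkey i j
  have hdetT : IsUnit (Matrix.diagonal t).det := by
    rw [Matrix.det_diagonal]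
    exact isUnit_iff_ne_zero.mpr (Finset.prod_ne_zero_iff.mpr fun j _ => htne j)
  have hdetS : IsUnit (Matrix.diagonal τ).det := by
    rw [Matrix.det_diagonal]
    exact isUnit_iff_ne_zero.mpr (Finset.prod_ne_zero_iff.mpr fun i _ => hτne i)
  calc (Df z).rank = (Df z * Matrix.diagonal t).rank :=
        (Matrix.rank_mul_eq_left_of_isUnit_det _ _ hdetT).symm
    _ = (Matrix.diagonal τ * Df r).rank := by rw [hM]
    _ = (Df r).rank := Matrix.rank_mul_eq_right_of_isUnit_det _ _ hdetS
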